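/- Let $X \ge 0$ and suppose $X \le G_0 + G_1 \log(1 + cX)$ for constants $G_0, G_1, c \ge 0$. Then $X \le 2G_0 + 2G_1 + 2G_1\log(1 + 2ecG_1)$. -/

import Mathlib

theorem stmt_18 (X G₀ G₁ c : ℝ) (hX : 0 ≤ X) (hG₀ : 0 ≤ G₀) (hG₁ : 0 ≤ G₁) (hc : 0 ≤ c)
    (h : X ≤ G₀ + G₁ * Real.log (1 + c * X)) :
    X ≤ 2 * G₀ + 2 * G₁ + 2 * G₁ * Real.log (1 + 2 * Real.exp 1 * c * G₁) := by
  have he : (1:ℝ) ≤ Real.exp 1 := by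
    have := Real.add_one_le_exp (1:ℝ); linarith
  have hD : (0:ℝ) < 1 + 2 * Real.exp 1 * c * G₁ := by positivity
  have hlogD : 0 ≤ Real.log (1 + 2 * Real.exp 1 * c * G₁) :=
    Real.log_nonneg (by nlinarith [mul_nonneg hc hG₁])
  rcases eq_or_lt_of_le hc with hc0 | hc0
  · have : Real.log (1 + c * X) = 0 := by rw [← hc0]; simp
    rw [this] at h; simp at h; nlinarith
  rcases eq_or_lt_of_le hG₁ with hG10 | hG10
  · rw [← hG10] at h ⊢; simp at h ⊢; nlinarith
  have hA : (0:ℝ) < 1 + c * X := by nlinarith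
  set D := 1 + 2 * Real.exp 1 * c * G₁ with hDdef
  have hEpos : (0:ℝ) < 2 * Real.exp 1 * G₁ := by positivity
  have hsplit : Real.log (1 + c * X) = Real.log ((1 + c * X) / D) + Real.log D := by
    rw [Real.log_div (ne_of_gt hA) (ne_of_gt hD)]; ring
  have hq : (1 + c * X) / D ≤ 1 + X / (2 * Real.exp 1 * G₁) := by
    rw [div_le_iff₀ hD]
    have h2 : X / (2 * Real.exp 1 * G₁) * (2 * Real.exp 1 * c * G₁) = c * X := by
      field_simp
    have h3 : 0 ≤ X / (2 * Real.exp 1 * G₁) := div_nonneg hX hEpos.le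
    nlinarith [mul_nonneg (mul_nonneg (mul_nonneg hc hG₁) hX) (Real.exp_pos 1).le,
      mul_nonneg hc hG₁]
  have hlog1 : Real.log ((1 + c * X) / D) ≤ X / (2 * Real.exp 1 * G₁) :=
    le_trans (Real.log_le_sub_one_of_pos (div_pos hA hD)) (by linarith)
  have hmul : G₁ * (X / (2 * Real.exp 1 * G₁)) = X / (2 * Real.exp 1) := by
    field_simp
  have hbound : G₁ * Real.log (1 + c * X) ≤ X / 2 + G₁ * Real.log D := by
    rw [hsplit, mul_add]
    have h4 : G₁ * Real.log ((1 + c * X) / D) ≤ X / (2 * Real.exp 1) := by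
      rw [← hmul]; exact mul_le_mul_of_nonneg_left hlog1 hG₁
    have h5 : X / (2 * Real.exp 1) ≤ X / 2 := by
      apply div_le_div_of_nonneg_left hX (by norm_num) <;> linarith
    linarith
  nlinarith
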